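/- Fix integers n ≥ 2 and l, m ≥ 0. For all α, γ ∈ B^{(n)}_l and β, δ ∈ B^{(n)}_m with γ − δ = α − β, the rational function z ↦ A^{(m,l)}(z)^{ρ(δ),ρ(α)}_{ρ(β),ρ(γ)} ∈ ℚ(q)(z) is regular at z = q^{−m−l}, and its value there equals q^{⟨δ,α⟩ + ⟨γ,β⟩} · binom(l+m, m)_{q²}^{−1} · ∏_{i=1}^{n} binom(α_i + δ_i, α_i)_{q²}, where ρ(α) = (α_n, …, α₂, α₁) denotes the reversal. (Equivalently, the R matrix with elements R*(z)^{γ,δ}_{α,β} = θ(γ−δ = α−β) A^{(m,l)}(z^{−1})^{ρ(δ),ρ(α)}_{ρ(β),ρ(γ)} factorizes at the special point z = q^{m+l}.) -/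

import Mathlib

open scoped Classical

noncomputable section

namespace KOY

/-- `F = ℚ(q)`, the field of rational functions in an indeterminate `q` over `ℚ`. -/
abbrev Fq : Type := RatFunc ℚ

/-- The indeterminate `q`. -/
def q : Fq := RatFunc.X

/-- `[u] = (q^u - q^{-u})/(q - q⁻¹)`. -/
def qint (u : ℤ) : Fq := (q ^ u - q ^ (-u)) / (q - q⁻¹)

/-- `(z; a)_m = ∏_{k=0}^{m-1} (1 - z a^k)`. -/
def poch {R : Type*} [CommRing R] (z a : R) (m : ℕ) : R :=
  ∏ k ∈ Finset.range m, (1 - z * a ^ k)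

/-- The `q`-boson Fock space `⊕_{m ≥ 0} F·|m⟩`. -/
abbrev Fock : Type := ℕ →₀ Fq

/-- creation operator `a⁺ |m⟩ = |m+1⟩`. -/
def aP : Module.End Fq Fock := Finsupp.lift Fock Fq ℕ fun m => Finsupp.single (m + 1) 1

/-- annihilation operator `a⁻ |m⟩ = (1-q^m)|m-1⟩`. -/
def aM : Module.End Fq Fock :=
  Finsupp.lift Fock Fq ℕ fun m => (1 - q ^ m) • Finsupp.single (m - 1) 1

/-- `k |m⟩ = q^m |m⟩`. -/
def kO : Module.End Fq Fock := Finsupp.lift Fock Fq ℕ fun m => q ^ m • Finsupp.single m 1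

/-- The operator `G^j_i` for `i, j ≥ 0` (`i` = lower index, `j` = upper index):
`G^j_i = (-q;q)_{i+j} Σ_{m=0}^{t} ((q^{-t};q)_m (-q^{-t};q)_m / ((q;q)_m (-q^{-s};q)_m))
  (a⁺)^{(j-i)_+} (q^m k^m) (a⁻)^{(i-j)_+}` with `s = i+j`, `t = min i j`. -/
def GopN (i j : ℕ) : Module.End Fq Fock :=
  poch (-q) q (i + j) •
    ∑ m ∈ Finset.range (min i j + 1),
      (poch (q ^ (-(min i j : ℤ))) q m * poch (-q ^ (-(min i j : ℤ))) q m /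
          (poch q q m * poch (-q ^ (-((i : ℤ) + j))) q m)) •
        (aP ^ (j - i) * (q ^ m • kO ^ m) * aM ^ (i - j))

/-- `G^j_i` with the convention that it vanishes for negative indices. -/
def Gop (i j : ℤ) : Module.End Fq Fock :=
  if 0 ≤ i ∧ 0 ≤ j then GopN i.toNat j.toNat else 0

/-- `X_{mm}`: the coefficient of `|m⟩` in `X |m⟩`. -/
def elem (X : Module.End Fq Fock) (m : ℕ) : Fq := X (Finsupp.single m 1) m

/-- `⟨a, b⟩ = ∑_{i<j} a_i b_j` (natural numbers). -/
def innN {n : ℕ} (a b : Fin n → ℕ) : ℕ := ∑ i, ∑ j, if i < j then a i * b j else 0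

/-- `⟨a, b⟩ = ∑_{i<j} a_i b_j` (integers). -/
def innZ {n : ℕ} (a b : Fin n → ℤ) : ℤ := ∑ i, ∑ j, if i < j then a i * b j else 0

/-- `|a| = ∑ a_i`. -/
def asum {k : ℕ} (a : Fin k → ℤ) : ℤ := ∑ i, a i

/-- coercion of arrays to integer arrays. -/
def castZ {n : ℕ} (a : Fin n → ℕ) : Fin n → ℤ := fun i => (a i : ℤ)

/-- The matrix product formula for `K^{(n,l)}(z)^γ_α` as a power series in `t = z⁻¹`:
`q^{⟨γ,α⟩} (q^{-l}t;q)_{l+1} ((q²;q²)_l (-qt;q)_l)⁻¹ Σ_{m≥0} q^{-lm} t^m (G^{γ₁}_{α₁}⋯G^{γₙ}_{αₙ})_{mm}`,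
with coefficients transported along a ring hom `f` from `ℚ(q)`. -/
def KmatPS {K : Type*} [Field K] (f : Fq →+* K) (n l : ℕ) (α γ : Fin n → ℕ) :
    PowerSeries K :=
  PowerSeries.C (R := K) (f (q ^ innN γ α)) *
    poch (PowerSeries.C (R := K) (f (q ^ (-(l : ℤ)))) * PowerSeries.X) (PowerSeries.C (R := K) (f q)) (l + 1) *
    (PowerSeries.C (R := K) (f (poch (q ^ 2) (q ^ 2) l)) *
        poch (PowerSeries.C (R := K) (f (-q)) * PowerSeries.X) (PowerSeries.C (R := K) (f q)) l)⁻¹ *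
    PowerSeries.mk fun m =>
      f (q ^ (-(l * m : ℤ)) * elem (List.ofFn fun i => Gop (α i) (γ i)).prod m)

/-- `F((t))`, the field of formal Laurent series in `t`. -/
abbrev LS : Type := LaurentSeries Fq

/-- `K^{(n,l)}(z)^γ_α ∈ F((t))` (first array = lower index `α`, second = upper index `γ`). -/
def Kmat (n l : ℕ) (α γ : Fin n → ℕ) : LS :=
  HahnSeries.ofPowerSeries ℤ Fq (KmatPS (RingHom.id Fq) n l α γ)

/-- Extension of `Kmat` to integer arrays, vanishing if some entry is negative. -/
def KmatZ (n l : ℕ) (α γ : Fin n → ℤ) : LS :=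
  if (∀ i, 0 ≤ α i) ∧ ∀ i, 0 ≤ γ i then
    Kmat n l (fun i => (α i).toNat) fun i => (γ i).toNat
  else 0

/-- `t ∈ F((t))`. -/
def T : LS := HahnSeries.single (1 : ℤ) (1 : Fq)

/-- the constant embedding `F → F((t))`. -/
def CL : Fq →+* LS := HahnSeries.C

/-- `Φ̄_q(γ|β; λ, μ)` for integer arrays, vanishing unless `0 ≤ γ ≤ β`. -/
def phiBarP {K : Type*} [Field K] (qv lam mu : K) {k : ℕ} (γ β : Fin k → ℤ) : K :=
  if ∀ i, 0 ≤ γ i ∧ γ i ≤ β i then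
    poch lam qv (asum γ).toNat * poch (mu / lam) qv (asum β - asum γ).toNat /
        poch mu qv (asum β).toNat *
      ∏ i, poch qv qv (β i).toNat / (poch qv qv (β i - γ i).toNat * poch qv qv (γ i).toNat)
  else 0

/-- `Φ_q(γ|β; λ, μ) = q^{⟨β-γ,γ⟩} (μ/λ)^{|γ|} Φ̄_q(γ|β; λ, μ)`. -/
def phiP {K : Type*} [Field K] (qv lam mu : K) {k : ℕ} (γ β : Fin k → ℤ) : K :=
  qv ^ innZ (β - γ) γ * (mu / lam) ^ asum γ * phiBarP qv lam mu γ β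

/-- truncation `ᾱ = (α₁, …, α_{n-1})` (as an integer array). -/
def bar {n : ℕ} (a : Fin n → ℕ) : Fin (n - 1) → ℤ :=
  fun i => (a ⟨i.val, by have := i.isLt; omega⟩ : ℤ)

/-- `A^{(l,m)}(z)^{γ,δ}_{α,β}
  = q^{⟨α,β⟩-⟨δ,γ⟩} Σ_{ξ̄+η̄=γ̄+δ̄} Φ_{q²}(ξ̄-δ̄|ξ̄; q^{m-l}z, q^{-l-m}z) Φ_{q²}(η̄|β̄; q^{-l-m}z⁻¹, q^{-2m})`
in any field, for chosen values of `q` and `z`. -/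
def Amat {K : Type*} [Field K] (qv zv : K) {n : ℕ} (l m : ℕ) (γ δ α β : Fin n → ℕ) : K :=
  qv ^ ((innN α β : ℤ) - (innN δ γ : ℤ)) *
    ∑ ξ ∈ Finset.Icc (0 : Fin (n - 1) → ℤ) (bar γ + bar δ),
      phiP (qv ^ 2) (qv ^ ((m : ℤ) - l) * zv) (qv ^ (-(l : ℤ) - m) * zv) (ξ - bar δ) ξ *
        phiP (qv ^ 2) (qv ^ (-(l : ℤ) - m) * zv⁻¹) (qv ^ (-(2 * m : ℤ))) (bar γ + bar δ - ξ)
          (bar β)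

/-- `𝒮(λ,μ)^{γ,δ}_{α,β} = θ(γ+δ=α+β) q^{⟨β-γ,γ⟩+⟨α,β-γ⟩+|α||β|-|γ||δ|} λ^{2(|δ|-|α|)}
  Φ̄_{q²}(α|δ; λ², μ²)`, the parametric `R` matrix element. -/
def Smat {K : Type*} [Field K] (qv lam mu : K) {k : ℕ} (γ δ α β : Fin k → ℕ) : K :=
  if γ + δ = α + β then
    qv ^ (innZ (castZ β - castZ γ) (castZ γ) + innZ (castZ α) (castZ β - castZ γ) +
          (asum (castZ α) * asum (castZ β) - asum (castZ γ) * asum (castZ δ))) *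
      lam ^ (2 * (asum (castZ δ) - asum (castZ α))) *
      phiBarP (qv ^ 2) (lam ^ 2) (mu ^ 2) (castZ α) (castZ δ)
  else 0

/-- reversal `ρ(a) = (a_n, …, a_1)`. -/
def rev {n : ℕ} {M : Type*} (a : Fin n → M) : Fin n → M := fun i => a i.rev

/-- cyclic shift `σ(a) = (a_2, …, a_n, a_1)`. -/
def cyc {n : ℕ} {M : Type*} (a : Fin n → M) : Fin n → M :=
  fun i => a ⟨(i.val + 1) % n, Nat.mod_lt _ (by have := i.isLt; omega)⟩

/-- the cyclic successor on `Fin n`. -/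
def nxt {n : ℕ} (i : Fin n) : Fin n :=
  ⟨(i.val + 1) % n, Nat.mod_lt _ (by have := i.isLt; omega)⟩

/-- deletion of the `i`-th entry of an array. -/
def del {n : ℕ} (i : Fin n) (a : Fin n → ℕ) : Fin (n - 1) → ℕ :=
  fun j =>
    if (j : ℕ) < (i : ℕ) then a ⟨j, by have := j.isLt; omega⟩
    else a ⟨(j : ℕ) + 1, by have := j.isLt; omega⟩

/-- the `q²`-binomial coefficient `binom(b, c)_{q²}` as an element of `ℚ(q)`. -/
def qbinom2 (b c : ℕ) : Fq :=
  poch (q ^ 2) (q ^ 2) b / (poch (q ^ 2) (q ^ 2) (b - c) * poch (q ^ 2) (q ^ 2) c)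

/-- `ℚ(q)(z) = ℚ(q, z)`. -/
abbrev Fqz : Type := RatFunc Fq

/-- the image of `q` in `ℚ(q, z)`. -/
def qz : Fqz := RatFunc.C q

/-- the indeterminate `z` in `ℚ(q, z)`. -/
def zz : Fqz := RatFunc.X

-- ===================== auxiliary machinery =====================

section Aux

open RatFunc

lemma q_ne_zero : (q : Fq) ≠ 0 := RatFunc.X_ne_zero

lemma q_pow_ne_one {k : ℕ} (hk : k ≠ 0) : (q : Fq) ^ k ≠ 1 := by
  intro h
  unfold q at h
  have h2 : algebraMap (Polynomial ℚ) Fq (Polynomial.X ^ k) = algebraMap (Polynomial ℚ) Fq 1 := by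
    rw [map_pow, map_one, RatFunc.algebraMap_X]; exact h
  have h3 : (Polynomial.X : Polynomial ℚ) ^ k = 1 := RatFunc.algebraMap_injective ℚ h2
  have h4 := congrArg Polynomial.natDegree h3
  simp [Polynomial.natDegree_X_pow] at h4
  exact hk h4

lemma q_zpow_ne_one {k : ℤ} (hk : k ≠ 0) : (q : Fq) ^ k ≠ 1 := by
  rcases lt_trichotomy k 0 with h | h | h
  · intro he
    have h1 : (q : Fq) ^ (-k) = 1 := by
      rw [zpow_neg, he, inv_one]
    have h2 : (q : Fq) ^ ((-k).toNat) = 1 := by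
      rw [← h1, ← zpow_natCast, Int.toNat_of_nonneg (by omega)]
    exact q_pow_ne_one (by omega) h2
  · exact absurd h hk
  · intro he
    have h2 : (q : Fq) ^ (k.toNat) = 1 := by
      rw [← he, ← zpow_natCast, Int.toNat_of_nonneg (by omega)]
    exact q_pow_ne_one (by omega) h2

lemma one_sub_q_zpow_ne_zero {k : ℤ} (hk : k ≠ 0) : (1 : Fq) - q ^ k ≠ 0 := by
  intro h
  exact q_zpow_ne_one hk (by linear_combination -h)

lemma q_zpow_ne_zero (k : ℤ) : (q : Fq) ^ k ≠ 0 := zpow_ne_zero k q_ne_zero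

/-- `(q²;q²)_N ≠ 0`. -/
lemma pochP_ne_zero (N : ℕ) : poch (q ^ 2) (q ^ 2) N ≠ 0 := by
  unfold poch
  rw [Finset.prod_ne_zero_iff]
  intro k _
  have : (q : Fq) ^ 2 * (q ^ 2) ^ k = q ^ ((2 * (k + 1) : ℕ) : ℤ) := by
    rw [zpow_natCast]; ring
  rw [this]
  exact one_sub_q_zpow_ne_zero (by omega)

/-- `(q^{-2N};q²)_k ≠ 0` for `k ≤ N`. -/
lemma pochM_ne_zero {N k : ℕ} (h : k ≤ N) :
    poch (q ^ (-(2 * N : ℤ))) (q ^ 2) k ≠ 0 := by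
  unfold poch
  rw [Finset.prod_ne_zero_iff]
  intro j hj
  rw [Finset.mem_range] at hj
  have he : (q : Fq) ^ (-(2 * N : ℤ)) * (q ^ 2) ^ j = q ^ ((2 * j : ℤ) - 2 * N) := by
    rw [show ((q : Fq) ^ 2) ^ j = q ^ ((2 * j : ℕ) : ℤ) by rw [zpow_natCast]; ring,
      ← zpow_add₀ q_ne_zero]
    congr 1
    push_cast
    ring
  rw [he]
  exact one_sub_q_zpow_ne_zero (by omega)

-- ===================== evaluation machinery =====================

/-- `x` is regular at `z₀` with value `v`. -/
def Ev (z₀ : Fq) (x : Fqz) (v : Fq) : Prop :=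
  Polynomial.eval z₀ x.denom ≠ 0 ∧ RatFunc.eval (RingHom.id Fq) z₀ x = v

variable {z₀ : Fq}

lemma eval₂_id (p : Polynomial Fq) (a : Fq) :
    Polynomial.eval₂ (RingHom.id Fq) a p = p.eval a := rfl

lemma eval_ne_of_dvd {p r : Polynomial Fq} (h : p ∣ r) (hr : Polynomial.eval z₀ r ≠ 0) :
    Polynomial.eval z₀ p ≠ 0 := by
  obtain ⟨c, rfl⟩ := h
  intro hp
  exact hr (by simp [Polynomial.eval_mul, hp])

lemma ev_C (c : Fq) : Ev z₀ (RatFunc.C c) c := by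
  constructor
  · simp
  · simp

lemma ev_X : Ev z₀ RatFunc.X z₀ := by
  constructor
  · simp
  · simp

lemma ev_zero : Ev z₀ 0 0 := by
  simpa using ev_C 0

lemma ev_one : Ev z₀ 1 1 := by
  simpa using ev_C 1

lemma ev_add {x y : Fqz} {u v : Fq} (hx : Ev z₀ x u) (hy : Ev z₀ y v) :
    Ev z₀ (x + y) (u + v) := by
  refine ⟨eval_ne_of_dvd (RatFunc.denom_add_dvd x y) ?_, ?_⟩
  · rw [Polynomial.eval_mul]; exact mul_ne_zero hx.1 hy.1
  · rw [RatFunc.eval_add _ _ hx.1 hy.1, hx.2, hy.2]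

lemma ev_mul {x y : Fqz} {u v : Fq} (hx : Ev z₀ x u) (hy : Ev z₀ y v) :
    Ev z₀ (x * y) (u * v) := by
  refine ⟨eval_ne_of_dvd (RatFunc.denom_mul_dvd x y) ?_, ?_⟩
  · rw [Polynomial.eval_mul]; exact mul_ne_zero hx.1 hy.1
  · rw [RatFunc.eval_mul _ _ hx.1 hy.1, hx.2, hy.2]

lemma ev_neg {x : Fqz} {u : Fq} (hx : Ev z₀ x u) : Ev z₀ (-x) (-u) := by
  have := ev_mul (ev_C (-1)) hx
  simpa using this

lemma ev_sub {x y : Fqz} {u v : Fq} (hx : Ev z₀ x u) (hy : Ev z₀ y v) :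
    Ev z₀ (x - y) (u - v) := by
  simpa [sub_eq_add_neg] using ev_add hx (ev_neg hy)

lemma ev_pow {x : Fqz} {u : Fq} (hx : Ev z₀ x u) (n : ℕ) : Ev z₀ (x ^ n) (u ^ n) := by
  induction n with
  | zero => simpa using ev_one
  | succ n ih => rw [pow_succ, pow_succ]; exact ev_mul ih hx

lemma ev_inv {x : Fqz} {u : Fq} (hx : Ev z₀ x u) (hu : u ≠ 0) : Ev z₀ x⁻¹ u⁻¹ := by
  have hx0 : x ≠ 0 := by
    rintro rfl
    rw [← hx.2] at hu
    simp at hu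
  have hnum : Polynomial.eval z₀ x.num ≠ 0 := by
    intro h0
    apply hu
    rw [← hx.2]
    unfold RatFunc.eval
    rw [eval₂_id, h0, zero_div]
  have hxi : x⁻¹ = algebraMap (Polynomial Fq) Fqz x.denom / algebraMap (Polynomial Fq) Fqz x.num := by
    rw [← RatFunc.num_div_denom x, inv_div, RatFunc.num_div_denom x]
  have hreg : Polynomial.eval z₀ (x⁻¹).denom ≠ 0 := by
    rw [hxi]
    exact eval_ne_of_dvd (RatFunc.denom_div_dvd x.denom x.num) hnum
  refine ⟨hreg, ?_⟩
  have h1 : RatFunc.eval (RingHom.id Fq) z₀ (x * x⁻¹) = 1 := by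
    rw [mul_inv_cancel₀ hx0]; simp
  rw [RatFunc.eval_mul _ _ hx.1 hreg, hx.2] at h1
  exact eq_inv_of_mul_eq_one_left (by rw [mul_comm]; exact h1)

lemma ev_div {x y : Fqz} {u v : Fq} (hx : Ev z₀ x u) (hy : Ev z₀ y v) (hv : v ≠ 0) :
    Ev z₀ (x / y) (u / v) := by
  rw [div_eq_mul_inv, div_eq_mul_inv]
  exact ev_mul hx (ev_inv hy hv)

lemma ev_prod {ι : Type*} (s : Finset ι) (f : ι → Fqz) (g : ι → Fq)
    (h : ∀ i ∈ s, Ev z₀ (f i) (g i)) :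
    Ev z₀ (∏ i ∈ s, f i) (∏ i ∈ s, g i) := by
  classical
  induction s using Finset.induction_on with
  | empty => simpa using ev_one
  | insert _ _ hni ih =>
    rw [Finset.prod_insert hni, Finset.prod_insert hni]
    exact ev_mul (h _ (Finset.mem_insert_self _ _))
      (ih fun i hi => h i (Finset.mem_insert_of_mem hi))

lemma ev_sum {ι : Type*} (s : Finset ι) (f : ι → Fqz) (g : ι → Fq)
    (h : ∀ i ∈ s, Ev z₀ (f i) (g i)) :
    Ev z₀ (∑ i ∈ s, f i) (∑ i ∈ s, g i) := by
  classical
  induction s using Finset.induction_on with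
  | empty => simpa using ev_zero
  | insert _ _ hni ih =>
    rw [Finset.sum_insert hni, Finset.sum_insert hni]
    exact ev_add (h _ (Finset.mem_insert_self _ _))
      (ih fun i hi => h i (Finset.mem_insert_of_mem hi))

lemma ev_poch {x y : Fqz} {u v : Fq} (hx : Ev z₀ x u) (hy : Ev z₀ y v) (n : ℕ) :
    Ev z₀ (poch x y n) (poch u v n) := by
  unfold poch
  exact ev_prod _ _ _ fun k _ => ev_sub ev_one (ev_mul hx (ev_pow hy k))

lemma ev_zpowC (c : Fq) (k : ℤ) : Ev z₀ ((RatFunc.C c) ^ k) (c ^ k) := by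
  rw [← map_zpow₀]
  exact ev_C _

end Aux

-- ===================== index combinatorics =====================

section Idx

lemma innN_rev {n : ℕ} (a b : Fin n → ℕ) : innN (rev a) (rev b) = innN b a := by
  unfold innN rev
  have step1 : (∑ i : Fin n, ∑ j : Fin n, if i < j then a i.rev * b j.rev else 0)
      = ∑ u : Fin n, ∑ v : Fin n, if v < u then a u * b v else 0 := by
    refine Fintype.sum_equiv Fin.revPerm _ _ fun i => ?_
    simp only [Fin.revPerm_apply]
    refine Fintype.sum_equiv Fin.revPerm _ _ fun j => ?_
    simp only [Fin.revPerm_apply]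
    by_cases h : i < j
    · rw [if_pos h, if_pos ((Fin.rev_lt_rev).mpr h)]
    · rw [if_neg h, if_neg (fun hc => h (Fin.rev_lt_rev.mp hc))]
  rw [step1, Finset.sum_comm]
  refine Finset.sum_congr rfl fun i _ => Finset.sum_congr rfl fun j _ => ?_
  by_cases h : i < j
  · rw [if_pos h, if_pos h, mul_comm]
  · rw [if_neg h, if_neg h]

/-- the embedding `Fin (n-1) → Fin n`, `p ↦ n-1-p`. -/
def Jmap (n : ℕ) (p : Fin (n - 1)) : Fin n := ⟨n - 1 - (p : ℕ), by have := p.isLt; omega⟩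

lemma Jmap_inj (n : ℕ) : Function.Injective (Jmap n) := by
  intro p p' h
  have hp := p.isLt
  have hp' := p'.isLt
  have : (Jmap n p).val = (Jmap n p').val := by rw [h]
  simp only [Jmap] at this
  exact Fin.ext (by omega)

lemma Jmap_lt_Jmap {n : ℕ} (p p' : Fin (n - 1)) : Jmap n p < Jmap n p' ↔ p' < p := by
  have hp := p.isLt
  have hp' := p'.isLt
  simp only [Jmap, Fin.lt_def]
  omega

lemma Jmap_pos {n : ℕ} (hn : 2 ≤ n) (p : Fin (n - 1)) :
    (⟨0, by omega⟩ : Fin n) < Jmap n p := by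
  have hp := p.isLt
  simp only [Jmap, Fin.lt_def]
  omega

lemma Jmap_image {n : ℕ} (hn : 2 ≤ n) :
    Finset.univ.map ⟨Jmap n, Jmap_inj n⟩ = Finset.univ.erase (⟨0, by omega⟩ : Fin n) := by
  ext i
  rw [Finset.mem_map, Finset.mem_erase]
  constructor
  · rintro ⟨p, -, rfl⟩
    refine ⟨?_, Finset.mem_univ _⟩
    have hp := p.isLt
    simp only [Function.Embedding.coeFn_mk, Jmap, ne_eq, Fin.ext_iff]
    omega
  · rintro ⟨hi, -⟩
    have hi' : (i : ℕ) ≠ 0 := fun h => hi (Fin.ext (by simpa using h))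
    have hlt := i.isLt
    refine ⟨⟨n - 1 - (i : ℕ), by omega⟩, Finset.mem_univ _, ?_⟩
    simp only [Function.Embedding.coeFn_mk, Jmap, Fin.ext_iff]
    omega

lemma sum_J {n : ℕ} (hn : 2 ≤ n) {M : Type*} [AddCommMonoid M] (g : Fin n → M) :
    ∑ i, g i = g ⟨0, by omega⟩ + ∑ p, g (Jmap n p) := by
  have h1 : (∑ p, g (Jmap n p)) = ∑ i ∈ Finset.univ.erase (⟨0, by omega⟩ : Fin n), g i := by
    rw [← Jmap_image hn, Finset.sum_map]
    simp only [Function.Embedding.coeFn_mk]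
  rw [h1, Finset.add_sum_erase _ g (Finset.mem_univ _)]

lemma prod_J {n : ℕ} (hn : 2 ≤ n) {M : Type*} [CommMonoid M] (g : Fin n → M) :
    ∏ i, g i = g ⟨0, by omega⟩ * ∏ p, g (Jmap n p) := by
  have h1 : (∏ p, g (Jmap n p)) = ∏ i ∈ Finset.univ.erase (⟨0, by omega⟩ : Fin n), g i := by
    rw [← Jmap_image hn, Finset.prod_map]
    simp only [Function.Embedding.coeFn_mk]
  rw [h1, Finset.mul_prod_erase _ g (Finset.mem_univ _)]

lemma bar_rev_apply {n : ℕ} (a : Fin n → ℕ) (p : Fin (n - 1)) :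
    bar (rev a) p = (a (Jmap n p) : ℤ) := by
  unfold bar rev Jmap
  congr 2
  have hp := p.isLt
  exact Fin.ext (by simp [Fin.val_rev]; omega)

lemma asum_bar_rev {n : ℕ} (hn : 2 ≤ n) (a : Fin n → ℕ) :
    asum (bar (rev a)) = (∑ i, (a i : ℤ)) - a ⟨0, by omega⟩ := by
  unfold asum
  rw [Finset.sum_congr rfl fun p _ => bar_rev_apply a p,
    sum_J hn (fun i => (a i : ℤ))]
  ring

lemma innZ_split {n : ℕ} (hn : 2 ≤ n) (a b : Fin n → ℕ) :
    innZ (castZ b) (castZ a)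
      = (b ⟨0, by omega⟩ : ℤ) * ((∑ i, (a i : ℤ)) - a ⟨0, by omega⟩)
        + innZ (bar (rev a)) (bar (rev b)) := by
  have lhs : innZ (castZ b) (castZ a) = ∑ i, ∑ j, if i < j then (b i : ℤ) * a j else 0 := rfl
  rw [lhs, sum_J hn (g := fun i => ∑ j, if i < j then (b i : ℤ) * a j else 0)]
  have piece1 : (∑ j, if (⟨0, by omega⟩ : Fin n) < j then (b ⟨0, by omega⟩ : ℤ) * a j else 0)
      = (b ⟨0, by omega⟩ : ℤ) * ((∑ i, (a i : ℤ)) - a ⟨0, by omega⟩) := by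
    rw [sum_J hn (g := fun j => if (⟨0, by omega⟩ : Fin n) < j then (b ⟨0, by omega⟩ : ℤ) * a j else 0)]
    rw [if_neg (lt_irrefl _), zero_add]
    rw [Finset.sum_congr rfl fun p _ => if_pos (Jmap_pos hn p)]
    rw [← Finset.mul_sum]
    congr 1
    rw [sum_J hn (fun i => (a i : ℤ))]
    ring
  have piece2 : (∑ p, ∑ j, if Jmap n p < j then (b (Jmap n p) : ℤ) * a j else 0)
      = innZ (bar (rev a)) (bar (rev b)) := by
    have inner : ∀ p : Fin (n - 1),
        (∑ j, if Jmap n p < j then (b (Jmap n p) : ℤ) * a j else 0)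
          = ∑ p', if p' < p then (b (Jmap n p) : ℤ) * a (Jmap n p') else 0 := by
      intro p
      rw [sum_J hn (g := fun j => if Jmap n p < j then (b (Jmap n p) : ℤ) * a j else 0)]
      rw [if_neg (by exact fun h => absurd (lt_trans (Jmap_pos hn p) h) (lt_irrefl _)), zero_add]
      refine Finset.sum_congr rfl fun p' _ => ?_
      by_cases h : p' < p
      · rw [if_pos ((Jmap_lt_Jmap p p').mpr h), if_pos h]
      · rw [if_neg (fun hc => h ((Jmap_lt_Jmap p p').mp hc)), if_neg h]
    rw [Finset.sum_congr rfl fun p _ => inner p]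
    unfold innZ
    rw [Finset.sum_comm]
    refine Finset.sum_congr rfl fun p _ => Finset.sum_congr rfl fun p' _ => ?_
    rw [bar_rev_apply, bar_rev_apply]
    by_cases h : p < p'
    · rw [if_pos h, if_pos h, mul_comm]
    · rw [if_neg h, if_neg h]
  rw [piece1, piece2]

lemma innN_cast {k : ℕ} (a b : Fin k → ℕ) :
    ((innN a b : ℕ) : ℤ) = innZ (castZ a) (castZ b) := by
  unfold innN innZ castZ
  push_cast [apply_ite (fun x : ℕ => (x : ℤ))]
  rfl

lemma asum_nonneg {k : ℕ} {a : Fin k → ℤ} (h : ∀ i, 0 ≤ a i) : 0 ≤ asum a :=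
  Finset.sum_nonneg fun i _ => h i

lemma asum_mono {k : ℕ} {a b : Fin k → ℤ} (h : a ≤ b) : asum a ≤ asum b :=
  Finset.sum_le_sum fun i _ => h i

lemma asum_zero {k : ℕ} : asum (0 : Fin k → ℤ) = 0 := by
  simp [asum]

lemma asum_add {k : ℕ} (a b : Fin k → ℤ) : asum (a + b) = asum a + asum b := by
  simp [asum, Finset.sum_add_distrib]

lemma asum_sub {k : ℕ} (a b : Fin k → ℤ) : asum (a - b) = asum a - asum b := by
  simp [asum, Finset.sum_sub_distrib]

lemma innZ_right_zero {k : ℕ} (a : Fin k → ℤ) : innZ a 0 = 0 := by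
  unfold innZ
  simp

lemma innZ_nonneg {k : ℕ} {a b : Fin k → ℤ} (ha : ∀ i, 0 ≤ a i) (hb : ∀ i, 0 ≤ b i) :
    0 ≤ innZ a b := by
  unfold innZ
  refine Finset.sum_nonneg fun i _ => Finset.sum_nonneg fun j _ => ?_
  by_cases h : i < j
  · rw [if_pos h]; exact mul_nonneg (ha i) (hb j)
  · rw [if_neg h]

end Idx

-- ===================== poch and phi lemmas =====================

section Poch

lemma poch_zero {R : Type*} [CommRing R] (z a : R) : poch z a 0 = 1 := rfl

lemma poch_succ {R : Type*} [CommRing R] (z a : R) (m : ℕ) :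
    poch z a (m + 1) = poch z a m * (1 - z * a ^ m) := Finset.prod_range_succ _ _

lemma poch_one_zero (a : Fq) {m : ℕ} (hm : 0 < m) : poch 1 a m = 0 := by
  unfold poch
  apply Finset.prod_eq_zero (Finset.mem_range.mpr hm)
  simp

lemma pochM_eq {N k : ℕ} (h : k ≤ N) :
    poch (q ^ (-(2 * N : ℤ))) (q ^ 2) k * poch (q ^ 2) (q ^ 2) (N - k) =
      (-1 : Fq) ^ k * q ^ ((k : ℤ) * ((k : ℤ) - 1) - 2 * N * k) * poch (q ^ 2) (q ^ 2) N := by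
  induction k with
  | zero => rw [Nat.sub_zero, poch_zero]; simp
  | succ k ih =>
    have hk : k ≤ N := by omega
    set a : Fq := q ^ ((2 * k : ℤ) - 2 * N) with ha
    set b : Fq := q ^ ((2 * N : ℤ) - 2 * k) with hb
    have hab : a * b = 1 := by
      rw [ha, hb, ← zpow_add₀ q_ne_zero]
      norm_num
    have h1 : (q : Fq) ^ (-(2 * N : ℤ)) * ((q : Fq) ^ 2) ^ k = a := by
      rw [show ((q : Fq) ^ 2) ^ k = q ^ ((2 * k : ℕ) : ℤ) by rw [zpow_natCast]; ring,
        ← zpow_add₀ q_ne_zero, ha]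
      congr 1
      push_cast
      ring
    have h2 : (q : Fq) ^ 2 * ((q : Fq) ^ 2) ^ (N - (k + 1)) = b := by
      rw [show (q : Fq) ^ 2 * ((q : Fq) ^ 2) ^ (N - (k+1)) = q ^ ((2 + 2 * (N - (k+1)) : ℕ) : ℤ)
        by rw [zpow_natCast]; rw [pow_add]; ring, hb]
      congr 1
      omega
    have hP : poch (q ^ 2) (q ^ 2) (N - k)
        = poch (q ^ 2) (q ^ 2) (N - (k + 1)) * (1 - b) := by
      rw [show N - k = (N - (k + 1)) + 1 by omega, poch_succ, h2]
    have key : -a * (1 - b) = 1 - a := by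
      rw [neg_mul, mul_one_sub, neg_sub, hab]
    have hexp : (q : Fq) ^ ((k : ℤ) * ((k : ℤ) - 1) - 2 * N * k) * a
        = q ^ (((k + 1 : ℕ) : ℤ) * (((k + 1 : ℕ) : ℤ) - 1) - 2 * N * (k + 1 : ℕ)) := by
      rw [ha, ← zpow_add₀ q_ne_zero]
      congr 1
      push_cast
      ring
    calc poch (q ^ (-(2 * N : ℤ))) (q ^ 2) (k + 1) * poch (q ^ 2) (q ^ 2) (N - (k + 1))
        = (poch (q ^ (-(2 * N : ℤ))) (q ^ 2) k * poch (q ^ 2) (q ^ 2) (N - k)) * (-a) := by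
          rw [poch_succ, h1, hP, ← key]
          ring
      _ = ((-1 : Fq) ^ k * q ^ ((k : ℤ) * ((k : ℤ) - 1) - 2 * N * k)
            * poch (q ^ 2) (q ^ 2) N) * (-a) := by rw [ih hk]
      _ = (-1 : Fq) ^ (k + 1) * q ^ (((k + 1 : ℕ) : ℤ) * (((k + 1 : ℕ) : ℤ) - 1)
            - 2 * N * (k + 1 : ℕ)) * poch (q ^ 2) (q ^ 2) N := by
          rw [pow_succ, ← hexp]
          ring

lemma pochM_formula {N k : ℕ} (h : k ≤ N) :
    poch (q ^ (-(2 * N : ℤ))) (q ^ 2) k =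
      (-1 : Fq) ^ k * q ^ ((k : ℤ) * ((k : ℤ) - 1) - 2 * N * k) * poch (q ^ 2) (q ^ 2) N /
        poch (q ^ 2) (q ^ 2) (N - k) := by
  rw [eq_div_iff (pochP_ne_zero _)]
  exact pochM_eq h

end Poch

section Phi

lemma ev_phiP {z₀ : Fq} {k : ℕ} (γ β : Fin k → ℤ) {lam mu : Fqz} {lam0 mu0 : Fq}
    (hl : Ev z₀ lam lam0) (hm : Ev z₀ mu mu0) (hl0 : lam0 ≠ 0)
    (hmu : poch mu0 (q ^ 2) (asum β).toNat ≠ 0) :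
    Ev z₀ (phiP ((qz : Fqz) ^ 2) lam mu γ β) (phiP ((q : Fq) ^ 2) lam0 mu0 γ β) := by
  have hq2 : Ev z₀ ((qz : Fqz) ^ 2) ((q : Fq) ^ 2) := ev_pow (ev_C q) 2
  unfold phiP
  by_cases hθ : ∀ i, 0 ≤ γ i ∧ γ i ≤ β i
  · have hag : 0 ≤ asum γ := asum_nonneg fun i => (hθ i).1
    obtain ⟨nn, hnn⟩ : ∃ nn : ℕ, asum γ = (nn : ℤ) :=
      ⟨(asum γ).toNat, (Int.toNat_of_nonneg hag).symm⟩
    have h1 : Ev z₀ (((qz : Fqz) ^ 2) ^ innZ (β - γ) γ) (((q : Fq) ^ 2) ^ innZ (β - γ) γ) := by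
      rw [show (qz : Fqz) ^ 2 = RatFunc.C ((q : Fq) ^ 2) from (map_pow RatFunc.C q 2).symm]
      exact ev_zpowC _ _
    have h2 : Ev z₀ ((mu / lam) ^ asum γ) ((mu0 / lam0) ^ asum γ) := by
      rw [hnn, zpow_natCast, zpow_natCast]
      exact ev_pow (ev_div hm hl hl0) nn
    have h3 : Ev z₀ (phiBarP ((qz : Fqz) ^ 2) lam mu γ β)
        (phiBarP ((q : Fq) ^ 2) lam0 mu0 γ β) := by
      unfold phiBarP
      rw [if_pos hθ, if_pos hθ]
      exact ev_mul
        (ev_div (ev_mul (ev_poch hl hq2 _) (ev_poch (ev_div hm hl hl0) hq2 _))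
          (ev_poch hm hq2 _) hmu)
        (ev_prod _ _ _ fun i _ => ev_div (ev_poch hq2 hq2 _)
          (ev_mul (ev_poch hq2 hq2 _) (ev_poch hq2 hq2 _))
          (mul_ne_zero (pochP_ne_zero _) (pochP_ne_zero _)))
    exact ev_mul (ev_mul h1 h2) h3
  · unfold phiBarP
    rw [if_neg hθ, if_neg hθ, mul_zero, mul_zero]
    exact ev_zero

lemma phiP_lam_one {k : ℕ} (γ β : Fin k → ℤ) (mu0 : Fq) (h : 0 < asum γ) :
    phiP ((q : Fq) ^ 2) 1 mu0 γ β = 0 := by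
  unfold phiP phiBarP
  split_ifs with hθ
  · rw [poch_one_zero (q ^ 2) (by omega : 0 < (asum γ).toNat)]
    ring
  · ring

lemma phiP_zero_one {k : ℕ} (β : Fin k → ℤ) (mu0 : Fq) (hβ : ∀ i, 0 ≤ β i)
    (hmu : poch mu0 ((q : Fq) ^ 2) (asum β).toNat ≠ 0) :
    phiP ((q : Fq) ^ 2) 1 mu0 (0 : Fin k → ℤ) β = 1 := by
  unfold phiP phiBarP
  rw [if_pos (fun i => ⟨le_refl (0 : ℤ), hβ i⟩)]
  rw [innZ_right_zero, asum_zero]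
  simp only [zpow_zero, Int.toNat_zero, poch_zero, sub_zero, Pi.zero_apply, div_one, one_mul,
    mul_one]
  rw [div_self hmu]
  rw [Finset.prod_congr rfl (fun i _ => by rw [div_self (pochP_ne_zero _)]),
    Finset.prod_const_one]
  ring

end Phi

-- ===================== final scalar identity =====================

lemma qbinom2_eq (b c : ℕ) : qbinom2 b c
    = poch (q ^ 2) (q ^ 2) b / (poch (q ^ 2) (q ^ 2) (b - c) * poch (q ^ 2) (q ^ 2) c) := rfl

lemma final_identity (l m a0 d0 : ℕ) (ha0 : a0 ≤ l) (hd0 : d0 ≤ m) (S : ℤ) :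
    ((q : Fq) ^ 2) ^ S * (q ^ (-(2 * (l : ℤ)))) ^ ((m : ℤ) - (d0 : ℤ)) *
        (poch (q ^ (-(2 * (m : ℤ)))) (q ^ 2) (m - d0) *
          poch (q ^ (-(2 * (l : ℤ)))) (q ^ 2) (l - a0) /
            poch (q ^ (-(2 * ((m + l : ℕ) : ℤ)))) (q ^ 2) (m - d0 + (l - a0)))
      = q ^ (2 * ((d0 : ℤ) * ((l : ℤ) - (a0 : ℤ)) + S)) *
          (qbinom2 (l + m) m)⁻¹ * qbinom2 (a0 + d0) a0 := by
  set M := m - d0 with hM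
  set L := l - a0 with hL
  have hMc : (M : ℤ) = (m : ℤ) - d0 := by omega
  have hLc : (L : ℤ) = (l : ℤ) - a0 := by omega
  have hMm : M ≤ m := by omega
  have hLl : L ≤ l := by omega
  have e1 := pochM_formula (N := m) (k := M) hMm
  have e2 := pochM_formula (N := l) (k := L) hLl
  have e3 := pochM_formula (N := m + l) (k := M + L) (by omega)
  rw [show m - M = d0 by omega] at e1
  rw [show l - L = a0 by omega] at e2
  rw [show m + l - (M + L) = d0 + a0 by omega] at e3
  have hb : (qbinom2 (l + m) m)⁻¹
      = poch (q^2) (q^2) l * poch (q^2) (q^2) m / poch (q^2) (q^2) (m + l) := by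
    rw [qbinom2_eq, Nat.add_sub_cancel, Nat.add_comm l m, inv_div]
  have hb0 : qbinom2 (a0 + d0) a0
      = poch (q^2) (q^2) (d0 + a0) / (poch (q^2) (q^2) d0 * poch (q^2) (q^2) a0) := by
    rw [qbinom2_eq, Nat.add_sub_cancel_left, Nat.add_comm a0 d0]
  rw [e1, e2, e3, hb, hb0]
  have hq2z : ((q : Fq) ^ 2) = q ^ (2 : ℤ) := by rw [zpow_two, sq]
  have hA : ((q : Fq) ^ 2) ^ S = q ^ (2 * S) := by rw [hq2z, ← zpow_mul]
  rw [hA, ← zpow_mul]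
  rw [show ((-1 : Fq)) ^ (M + L) = (-1 : Fq) ^ M * (-1 : Fq) ^ L from pow_add _ _ _]
  have hqq2 : (q : Fq) ^ (2 * S) * q ^ ((M : ℤ) * ((M : ℤ) - 1) - 2 * (m : ℤ) * (M : ℤ)) *
      q ^ ((L : ℤ) * ((L : ℤ) - 1) - 2 * (l : ℤ) * (L : ℤ))
      = q ^ (2 * ((d0 : ℤ) * ((l : ℤ) - (a0 : ℤ)) + S)) * q ^ (2 * (l : ℤ) * ((m : ℤ) - (d0 : ℤ))) *
        q ^ (((M : ℤ) + (L : ℤ)) * ((M : ℤ) + (L : ℤ) - 1) - 2 * ((m : ℤ) + (l : ℤ)) * ((M : ℤ) + (L : ℤ))) := by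
    rw [← zpow_add₀ q_ne_zero, ← zpow_add₀ q_ne_zero, ← zpow_add₀ q_ne_zero,
      ← zpow_add₀ q_ne_zero]
    congr 1
    rw [hMc, hLc]
    ring
  have hP1 := pochP_ne_zero m
  have hP2 := pochP_ne_zero l
  have hP3 := pochP_ne_zero (m + l)
  have hP4 := pochP_ne_zero d0
  have hP5 := pochP_ne_zero a0
  have hP6 := pochP_ne_zero (d0 + a0)
  have hs1 : ((-1 : Fq)) ^ M ≠ 0 := pow_ne_zero _ (by norm_num : (-1 : Fq) ≠ 0)
  have hs2 : ((-1 : Fq)) ^ L ≠ 0 := pow_ne_zero _ (by norm_num : (-1 : Fq) ≠ 0)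
  have hx1 : (q : Fq) ^ ((M : ℤ) * ((M : ℤ) - 1) - 2 * (m : ℤ) * (M : ℤ)) ≠ 0 := q_zpow_ne_zero _
  have hx2 : (q : Fq) ^ ((L : ℤ) * ((L : ℤ) - 1) - 2 * (l : ℤ) * (L : ℤ)) ≠ 0 := q_zpow_ne_zero _
  have hx3 : (q : Fq) ^ (((M + L : ℕ) : ℤ) * (((M + L : ℕ) : ℤ) - 1) - 2 * ((m + l : ℕ) : ℤ) * ((M + L : ℕ) : ℤ)) ≠ 0 :=
    q_zpow_ne_zero _
  field_simp
  simp only [← zpow_add₀ q_ne_zero]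
  congr 1
  push_cast
  rw [hMc, hLc]
  ring

/-- factorization of `R*` at the special point:
the rational function `A^{(m,l)}(z)^{ρ(δ),ρ(α)}_{ρ(β),ρ(γ)}` is regular at `z = q^{-m-l}`
and its value there is `q^{⟨δ,α⟩+⟨γ,β⟩} binom(l+m,m)_{q²}⁻¹ ∏ᵢ binom(αᵢ+δᵢ,αᵢ)_{q²}`. -/
theorem statement14 (n l m : ℕ) (hn : 2 ≤ n) (α γ β δ : Fin n → ℕ)
    (hα : ∑ i, α i = l) (hγ : ∑ i, γ i = l) (hβ : ∑ i, β i = m) (hδ : ∑ i, δ i = m)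
    (hc : castZ γ - castZ δ = castZ α - castZ β) :
    Polynomial.eval (q ^ (-(m : ℤ) - l))
        (Amat qz zz m l (rev δ) (rev α) (rev β) (rev γ)).denom ≠ 0 ∧
      RatFunc.eval (RingHom.id Fq) (q ^ (-(m : ℤ) - l))
          (Amat qz zz m l (rev δ) (rev α) (rev β) (rev γ)) =
        q ^ (innZ (castZ δ) (castZ α) + innZ (castZ γ) (castZ β)) *
          (qbinom2 (l + m) m)⁻¹ * ∏ i, qbinom2 (α i + δ i) (α i) := by
    -- MAIN PROOF
  haveI : NeZero n := ⟨by omega⟩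
  have hn0 : 0 < n := by omega
  set z₀ : Fq := q ^ (-(m : ℤ) - (l : ℤ)) with hz0eq
  have hz0 : z₀ ≠ 0 := q_zpow_ne_zero _
  suffices hEv : Ev z₀ (Amat qz zz m l (rev δ) (rev α) (rev β) (rev γ))
      (q ^ (innZ (castZ δ) (castZ α) + innZ (castZ γ) (castZ β)) *
        (qbinom2 (l + m) m)⁻¹ * ∏ i, qbinom2 (α i + δ i) (α i)) by
    exact ⟨hEv.1, hEv.2⟩
  unfold Amat
  set A := bar (rev α) with hA
  set D := bar (rev δ) with hD
  set G := bar (rev γ) with hG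
  set i0 : Fin n := ⟨0, hn0⟩ with hi0
  have hAappl : ∀ p, A p = (α (Jmap n p) : ℤ) := fun p => bar_rev_apply α p
  have hDappl : ∀ p, D p = (δ (Jmap n p) : ℤ) := fun p => bar_rev_apply δ p
  have hGappl : ∀ p, G p = (γ (Jmap n p) : ℤ) := fun p => bar_rev_apply γ p
  have hApos : ∀ p, 0 ≤ A p := fun p => by rw [hAappl p]; exact Int.natCast_nonneg _
  have hDpos : ∀ p, 0 ≤ D p := fun p => by rw [hDappl p]; exact Int.natCast_nonneg _
  have hGpos : ∀ p, 0 ≤ G p := fun p => by rw [hGappl p]; exact Int.natCast_nonneg _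
  have hαsum : (∑ i, (α i : ℤ)) = (l : ℤ) := by rw [← Nat.cast_sum, hα]
  have hδsum : (∑ i, (δ i : ℤ)) = (m : ℤ) := by rw [← Nat.cast_sum, hδ]
  have hγsum : (∑ i, (γ i : ℤ)) = (l : ℤ) := by rw [← Nat.cast_sum, hγ]
  have ha0 : α i0 ≤ l := by
    rw [← hα]; exact Finset.single_le_sum (fun i _ => Nat.zero_le _) (Finset.mem_univ _)
  have hd0 : δ i0 ≤ m := by
    rw [← hδ]; exact Finset.single_le_sum (fun i _ => Nat.zero_le _) (Finset.mem_univ _)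
  have hg0 : γ i0 ≤ l := by
    rw [← hγ]; exact Finset.single_le_sum (fun i _ => Nat.zero_le _) (Finset.mem_univ _)
  have hasumA : asum A = (l : ℤ) - (α i0 : ℤ) := by
    rw [hA, asum_bar_rev hn α, hαsum]
  have hasumD : asum D = (m : ℤ) - (δ i0 : ℤ) := by
    rw [hD, asum_bar_rev hn δ, hδsum]
  have hasumG : asum G = (l : ℤ) - (γ i0 : ℤ) := by
    rw [hG, asum_bar_rev hn γ, hγsum]
  -- evaluation of the building blocks
  have hlam1 : Ev z₀ ((qz : Fqz) ^ ((l : ℤ) - (m : ℤ)) * zz) (q ^ (-(2 * (m : ℤ)))) := by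
    have h := ev_mul (ev_zpowC (z₀ := z₀) q ((l : ℤ) - (m : ℤ))) (ev_X (z₀ := z₀))
    rwa [show (q : Fq) ^ ((l : ℤ) - (m : ℤ)) * z₀ = q ^ (-(2 * (m : ℤ))) by
      rw [hz0eq, ← zpow_add₀ q_ne_zero]; congr 1; ring] at h
  have hmu1 : Ev z₀ ((qz : Fqz) ^ (-(m : ℤ) - (l : ℤ)) * zz)
      (q ^ (-(2 * ((m + l : ℕ) : ℤ)))) := by
    have h := ev_mul (ev_zpowC (z₀ := z₀) q (-(m : ℤ) - (l : ℤ))) (ev_X (z₀ := z₀))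
    rwa [show (q : Fq) ^ (-(m : ℤ) - (l : ℤ)) * z₀ = q ^ (-(2 * ((m + l : ℕ) : ℤ))) by
      rw [hz0eq, ← zpow_add₀ q_ne_zero]; congr 1; push_cast; ring] at h
  have hlam2 : Ev z₀ ((qz : Fqz) ^ (-(m : ℤ) - (l : ℤ)) * zz⁻¹) 1 := by
    have h := ev_mul (ev_zpowC (z₀ := z₀) q (-(m : ℤ) - (l : ℤ)))
      (ev_inv (ev_X (z₀ := z₀)) hz0)
    rwa [show (q : Fq) ^ (-(m : ℤ) - (l : ℤ)) * z₀⁻¹ = 1 by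
      rw [hz0eq]; exact mul_inv_cancel₀ (q_zpow_ne_zero _)] at h
  have hmu2 : Ev z₀ ((qz : Fqz) ^ (-(2 * (l : ℕ) : ℤ))) (q ^ (-(2 * (l : ℤ)))) :=
    ev_zpowC (z₀ := z₀) q _
  have hmuG : poch (q ^ (-(2 * (l : ℤ)))) ((q : Fq) ^ 2) (asum G).toNat ≠ 0 := by
    have h := hasumG
    exact pochM_ne_zero (by omega)
  have hmuN1 : ∀ ξ : Fin (n - 1) → ℤ, ξ ∈ Finset.Icc (0 : Fin (n - 1) → ℤ) (D + A) →
      poch (q ^ (-(2 * ((m + l : ℕ) : ℤ)))) ((q : Fq) ^ 2) (asum ξ).toNat ≠ 0 := by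
    intro ξ hξ
    rw [Finset.mem_Icc] at hξ
    have h1 : asum ξ ≤ asum (D + A) := asum_mono hξ.2
    rw [asum_add, hasumD, hasumA] at h1
    exact pochM_ne_zero (by omega)
  -- per-term evaluation
  have hterm : ∀ ξ ∈ Finset.Icc (0 : Fin (n - 1) → ℤ) (D + A),
      Ev z₀
        (phiP ((qz : Fqz) ^ 2) ((qz : Fqz) ^ ((l : ℤ) - (m : ℤ)) * zz)
            ((qz : Fqz) ^ (-(m : ℤ) - (l : ℤ)) * zz) (ξ - A) ξ *
          phiP ((qz : Fqz) ^ 2) ((qz : Fqz) ^ (-(m : ℤ) - (l : ℤ)) * zz⁻¹)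
            ((qz : Fqz) ^ (-(2 * (l : ℕ) : ℤ))) (D + A - ξ) G)
        (phiP ((q : Fq) ^ 2) (q ^ (-(2 * (m : ℤ)))) (q ^ (-(2 * ((m + l : ℕ) : ℤ)))) (ξ - A) ξ *
          phiP ((q : Fq) ^ 2) 1 (q ^ (-(2 * (l : ℤ)))) (D + A - ξ) G) := fun ξ hξ =>
    ev_mul (ev_phiP _ _ hlam1 hmu1 (q_zpow_ne_zero _) (hmuN1 ξ hξ))
      (ev_phiP _ _ hlam2 hmu2 one_ne_zero hmuG)
  have hmemtop : D + A ∈ Finset.Icc (0 : Fin (n - 1) → ℤ) (D + A) :=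
    Finset.mem_Icc.mpr ⟨fun p => add_nonneg (hDpos p) (hApos p), le_refl _⟩
  -- collapse of the sum at the special point
  have hcollapse : (∑ ξ ∈ Finset.Icc (0 : Fin (n - 1) → ℤ) (D + A),
        (phiP ((q : Fq) ^ 2) (q ^ (-(2 * (m : ℤ)))) (q ^ (-(2 * ((m + l : ℕ) : ℤ)))) (ξ - A) ξ *
          phiP ((q : Fq) ^ 2) 1 (q ^ (-(2 * (l : ℤ)))) (D + A - ξ) G))
      = phiP ((q : Fq) ^ 2) (q ^ (-(2 * (m : ℤ)))) (q ^ (-(2 * ((m + l : ℕ) : ℤ)))) D (D + A) := by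
    rw [Finset.sum_eq_single_of_mem (D + A) hmemtop]
    · rw [sub_self, add_sub_cancel_right, phiP_zero_one G _ hGpos hmuG, mul_one]
    · intro ξ hξ hne
      have h2 := (Finset.mem_Icc.mp hξ).2
      have hnn : ∀ p, (0 : ℤ) ≤ (D + A - ξ) p := fun p => by
        have h3 := h2 p
        simp only [Pi.add_apply] at h3
        simp only [Pi.sub_apply, Pi.add_apply]
        omega
      have hpos : 0 < asum (D + A - ξ) := by
        rcases eq_or_lt_of_le (asum_nonneg hnn) with h | h
        · exfalso
          apply hne
          have h' : (∑ p, (D + A - ξ) p) = 0 := h.symm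
          have h0 := (Finset.sum_eq_zero_iff_of_nonneg (fun p _ => hnn p)).mp h'
          funext p
          have := h0 p (Finset.mem_univ p)
          simp only [Pi.sub_apply, Pi.add_apply] at this ⊢
          omega
        · exact h
      rw [phiP_lam_one _ _ _ hpos, mul_zero]
  -- explicit form of the top term
  have hθtop : ∀ p, 0 ≤ D p ∧ D p ≤ (D + A) p := fun p =>
    ⟨hDpos p, by simp only [Pi.add_apply]; have := hApos p; omega⟩
  have htop : phiP ((q : Fq) ^ 2) (q ^ (-(2 * (m : ℤ)))) (q ^ (-(2 * ((m + l : ℕ) : ℤ)))) D (D + A)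
      = ((q : Fq) ^ 2) ^ (innZ A D) * (q ^ (-(2 * (l : ℤ)))) ^ ((m : ℤ) - (δ i0 : ℤ)) *
        (poch (q ^ (-(2 * (m : ℤ)))) ((q : Fq) ^ 2) (m - δ i0) *
            poch (q ^ (-(2 * (l : ℤ)))) ((q : Fq) ^ 2) (l - α i0) /
              poch (q ^ (-(2 * ((m + l : ℕ) : ℤ)))) ((q : Fq) ^ 2) (m - δ i0 + (l - α i0)) *
          ∏ p, qbinom2 (α (Jmap n p) + δ (Jmap n p)) (α (Jmap n p))) := by
    unfold phiP phiBarP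
    rw [if_pos hθtop, add_sub_cancel_left]
    rw [show (q : Fq) ^ (-(2 * ((m + l : ℕ) : ℤ))) / q ^ (-(2 * (m : ℤ))) = q ^ (-(2 * (l : ℤ))) by
      rw [div_eq_iff (q_zpow_ne_zero _), ← zpow_add₀ q_ne_zero]; congr 1; push_cast; ring]
    rw [asum_add, hasumD, hasumA]
    rw [show ((m : ℤ) - (δ i0 : ℤ)).toNat = m - δ i0 by omega]
    rw [show ((m : ℤ) - (δ i0 : ℤ) + ((l : ℤ) - (α i0 : ℤ)) - ((m : ℤ) - (δ i0 : ℤ))).toNat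
        = l - α i0 by omega]
    rw [show ((m : ℤ) - (δ i0 : ℤ) + ((l : ℤ) - (α i0 : ℤ))).toNat = m - δ i0 + (l - α i0) by
      omega]
    congr 1
    congr 1
    refine Finset.prod_congr rfl fun p _ => ?_
    rw [Pi.add_apply, hAappl p, hDappl p, add_sub_cancel_left, ← Nat.cast_add,
      Int.toNat_natCast, Int.toNat_natCast, Int.toNat_natCast]
    rw [qbinom2_eq, Nat.add_sub_cancel_left, Nat.add_comm (δ (Jmap n p)) (α (Jmap n p)),
      mul_comm (poch ((q:Fq)^2) ((q:Fq)^2) (α (Jmap n p))) (poch ((q:Fq)^2) ((q:Fq)^2) (δ (Jmap n p)))]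
  -- the final value computation
  have hval : (q : Fq) ^ (((innN (rev β) (rev γ) : ℕ) : ℤ) - ((innN (rev α) (rev δ) : ℕ) : ℤ)) *
      phiP ((q : Fq) ^ 2) (q ^ (-(2 * (m : ℤ)))) (q ^ (-(2 * ((m + l : ℕ) : ℤ)))) D (D + A)
      = q ^ (innZ (castZ δ) (castZ α) + innZ (castZ γ) (castZ β)) *
          (qbinom2 (l + m) m)⁻¹ * ∏ i, qbinom2 (α i + δ i) (α i) := by
    rw [htop]
    rw [prod_J hn (fun i => qbinom2 (α i + δ i) (α i))]
    have FI := final_identity l m (α i0) (δ i0) ha0 hd0 (innZ A D)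
    have hcc : (innZ (castZ δ) (castZ α) + innZ (castZ γ) (castZ β))
        = (((innN (rev β) (rev γ) : ℕ) : ℤ) - ((innN (rev α) (rev δ) : ℕ) : ℤ))
          + 2 * ((δ i0 : ℤ) * ((l : ℤ) - (α i0 : ℤ)) + innZ A D) := by
      rw [innN_rev β γ, innN_rev α δ, innN_cast, innN_cast]
      have h2 := innZ_split hn α δ
      rw [hαsum, ← hA, ← hD] at h2
      rw [h2]
      ring
    rw [hcc, zpow_add₀ q_ne_zero]
    linear_combination ((q : Fq) ^ (((innN (rev β) (rev γ) : ℕ) : ℤ) -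
        ((innN (rev α) (rev δ) : ℕ) : ℤ)) *
      (∏ p, qbinom2 (α (Jmap n p) + δ (Jmap n p)) (α (Jmap n p)))) * FI
  -- put everything together
  have hfinal := ev_mul
    (ev_zpowC (z₀ := z₀) q (((innN (rev β) (rev γ) : ℕ) : ℤ) - ((innN (rev α) (rev δ) : ℕ) : ℤ)))
    ((hcollapse ▸ ev_sum (Finset.Icc (0 : Fin (n - 1) → ℤ) (D + A)) _ _ hterm :
      Ev z₀ _ (phiP ((q : Fq) ^ 2) (q ^ (-(2 * (m : ℤ))))
        (q ^ (-(2 * ((m + l : ℕ) : ℤ)))) D (D + A))))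
  rwa [hval] at hfinal

end KOY
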